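/- Perfect code bound: if r divides n, n/r ≠ 2, and C is a perfect single-error correcting r-regular multipermutation code (every r-regular multipermutation lies in exactly one sphere of radius 1 around a codeword multipermutation), then |C|_r ≥ n! / ((r!)^{n/r} · (1 + (n−1)² − (r−1)n)). -/

import Mathlib

namespace UlamPaper

/-- Underlying function of the translocation `φ(i,j)` (0-indexed). -/
def tf (i j k : ℕ) : ℕ :=
  if i ≤ j then (if k < i ∨ j < k then k else if k = j then i else k + 1)
  else (if k < j ∨ i < k then k else if k = j then i else k - 1)

theorem tf_lt {n i j k : ℕ} (hi : i < n) (hj : j < n) (hk : k < n) : tf i j k < n := by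
  unfold tf; split_ifs <;> omega

theorem tf_tf (i j k : ℕ) : tf j i (tf i j k) = k := by
  unfold tf; split_ifs <;> omega

/-- The translocation `φ(i,j)` as a permutation of `Fin n`: it deletes the entry in
position `i` and reinserts it at position `j`, shifting intermediate entries. -/
def transloc {n : ℕ} (i j : Fin n) : Equiv.Perm (Fin n) where
  toFun k := ⟨tf i.val j.val k.val, tf_lt i.isLt j.isLt k.isLt⟩
  invFun k := ⟨tf j.val i.val k.val, tf_lt j.isLt i.isLt k.isLt⟩
  left_inv k := Fin.ext (tf_tf i.val j.val k.val)
  right_inv k := Fin.ext (tf_tf j.val i.val k.val)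

/-- `IsTransloc φ` : `φ` is a translocation. -/
def IsTransloc {n : ℕ} (φ : Equiv.Perm (Fin n)) : Prop := ∃ i j : Fin n, φ = transloc i j

/-- Length of the longest common subsequence of two `n`-length sequences. -/
noncomputable def lcsLen {n : ℕ} {α : Type*} (u v : Fin n → α) : ℕ :=
  sSup {k | ∃ f g : Fin k → Fin n, StrictMono f ∧ StrictMono g ∧ ∀ p, u (f p) = v (g p)}

/-- The Ulam distance `d(σ,π) = n - ℓ(σ,π)`. -/
noncomputable def ulamDist {n : ℕ} (σ π : Equiv.Perm (Fin n)) : ℕ :=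
  n - lcsLen (⇑σ) (⇑π)

/-- The `r`-regular multipermutation `m_σ^r` (with values in `[1, n/r]`). -/
def mult {n : ℕ} (r : ℕ) (σ : Equiv.Perm (Fin n)) : Fin n → ℕ :=
  fun i => (σ i).val / r + 1

/-- The `r`-regular Ulam distance, expressed as `n - ℓ(m_σ^r, m_π^r)`. -/
noncomputable def multDist {n : ℕ} (r : ℕ) (σ π : Equiv.Perm (Fin n)) : ℕ :=
  n - lcsLen (mult r σ) (mult r π)

/-- The `r`-regular Ulam sphere of radius `t` centered at `m_σ^r`. -/
def multSphere {n : ℕ} (r : ℕ) (σ : Equiv.Perm (Fin n)) (t : ℕ) : Set (Fin n → ℕ) :=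
  {x | ∃ π : Equiv.Perm (Fin n), x = mult r π ∧ multDist r σ π ≤ t}

lemma gap_aux {m n : ℕ} (f : Fin m → Fin n) (hf : StrictMono f) :
    ∀ d (p q : Fin m), q.val = p.val + d → (f p).val + d ≤ (f q).val := by
  intro d
  induction d with
  | zero =>
    intro p q h
    have : p = q := Fin.ext (by omega)
    subst this; simp
  | succ d ih =>
    intro p q h
    have hq' : p.val + d < m := by have := q.isLt; omega
    have h1 := ih p ⟨p.val + d, hq'⟩ rfl
    have h2 : f ⟨p.val + d, hq'⟩ < f q := hf (by simp [Fin.lt_def]; omega)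
    have h3 := Fin.lt_def.mp h2
    omega

lemma gap_lemma {m n : ℕ} (f : Fin m → Fin n) (hf : StrictMono f) (p q : Fin m)
    (h : p.val ≤ q.val) : (f p).val + (q.val - p.val) ≤ (f q).val :=
  gap_aux f hf (q.val - p.val) p q (by omega)

lemma skip_lemma {m n : ℕ} (hmn : m + 1 = n) (f : Fin m → Fin n) (hf : StrictMono f) :
    ∃ i < n, ∀ p : Fin m, (f p).val = if p.val < i then p.val else p.val + 1 := by
  classical
  have hlow : ∀ p : Fin m, p.val ≤ (f p).val := by
    intro p
    have h0 : (0 : ℕ) < m := Nat.lt_of_le_of_lt (Nat.zero_le _) p.isLt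
    have := gap_lemma f hf ⟨0, h0⟩ p (Nat.zero_le _)
    have h00 : (⟨0, h0⟩ : Fin m).val = 0 := rfl
    omega
  have hhigh : ∀ p : Fin m, (f p).val ≤ p.val + 1 := by
    intro p
    have hp := p.isLt
    have hlast : m - 1 < m := by omega
    have h1 := gap_lemma f hf p ⟨m - 1, hlast⟩ (by simp; omega)
    have h2 : (f ⟨m - 1, hlast⟩).val < n := (f _).isLt
    simp at h1
    omega
  have hP : ∃ k, k = m ∨ ∃ h : k < m, (f ⟨k, h⟩).val ≠ k := ⟨m, Or.inl rfl⟩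
  have hdec : DecidablePred fun k => k = m ∨ ∃ h : k < m, (f ⟨k, h⟩).val ≠ k :=
    Classical.decPred _
  set i := Nat.find hP with hidef
  have hispec := Nat.find_spec hP
  have himin : ∀ k, k < i → ¬(k = m ∨ ∃ h : k < m, (f ⟨k, h⟩).val ≠ k) :=
    fun k hk => Nat.find_min hP hk
  have hile : i ≤ m := by
    by_contra h
    exact (himin m (by omega)) (Or.inl rfl)
  refine ⟨i, by omega, ?_⟩
  intro p
  by_cases hpi : p.val < i
  · have h1 := himin p.val hpi
    push_neg at h1
    have h2 := h1.2 p.isLt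
    simp only [Fin.eta] at h2
    simp [hpi, h2]
  · have him : i < m := by have := p.isLt; omega
    have hfi : (f ⟨i, him⟩).val = i + 1 := by
      rcases hispec with h | ⟨h, hne⟩
      · omega
      · have hne' : (f ⟨i, him⟩).val ≠ i := hne
        have hv : (⟨i, him⟩ : Fin m).val = i := rfl
        have hl := hlow ⟨i, him⟩
        have hh := hhigh ⟨i, him⟩
        omega
    have hg := gap_lemma f hf ⟨i, him⟩ p (by exact Nat.le_of_not_lt hpi)
    have hv : (⟨i, him⟩ : Fin m).val = i := rfl
    have hh := hhigh p
    simp only [if_neg hpi]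
    simp only at hg
    omega

lemma tf_diag (i k : ℕ) : tf i i k = k := by unfold tf; split_ifs <;> omega

lemma tfR4 (i k : ℕ) : tf (i+1) i k = tf i (i+1) k := by unfold tf; split_ifs <;> omega

lemma tfR2 (i j k : ℕ) (h : i < j) :
    tf i j k = tf (i+1) j k ∨ (tf i j k = i ∧ tf (i+1) j k = i+1) ∨
      (tf i j k = i+1 ∧ tf (i+1) j k = i) := by
  unfold tf; split_ifs <;> omega

lemma tfR3 (i j k : ℕ) (h : i < j) :
    tf i j k = tf i (j-1) k ∨ (tf i j k = i ∧ tf i (j-1) k = j) ∨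
      (tf i j k = j ∧ tf i (j-1) k = i) := by
  unfold tf; split_ifs <;> omega

lemma tfL2 (i j k : ℕ) (h : j < i) :
    tf i j k = tf (i-1) j k ∨ (tf i j k = i ∧ tf (i-1) j k = i-1) ∨
      (tf i j k = i-1 ∧ tf (i-1) j k = i) := by
  unfold tf; split_ifs <;> omega

lemma tfL3 (i j k : ℕ) (h : j < i) :
    tf i j k = tf i (j+1) k ∨ (tf i j k = i ∧ tf i (j+1) k = j) ∨
      (tf i j k = j ∧ tf i (j+1) k = i) := by
  unfold tf; split_ifs <;> omega

lemma pairEq (s : ℕ → ℕ) {a b x y : ℕ} (h : s a = s b)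
    (hd : x = y ∨ (x = a ∧ y = b) ∨ (x = b ∧ y = a)) : s x = s y := by
  rcases hd with h1 | ⟨h1, h2⟩ | ⟨h1, h2⟩ <;> subst h1 <;> try subst h2
  · rfl
  · exact h
  · exact h.symm

/-- canonical pair condition -/
def Pcond (s : ℕ → ℕ) (a b : ℕ) : Prop :=
  (a = 0 ∧ b = 0) ∨ (a < b ∧ s a ≠ s (a+1) ∧ s a ≠ s b) ∨
    (b + 1 < a ∧ s a ≠ s (a-1) ∧ s a ≠ s b)

lemma red (n : ℕ) (s : ℕ → ℕ) : ∀ N i j, i < n → j < n →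
    2 * (j - i) + 3 * (i - j) ≤ N →
    ∃ a b, a < n ∧ b < n ∧ Pcond s a b ∧ ∀ k, s (tf i j k) = s (tf a b k) := by
  intro N
  induction N with
  | zero =>
    intro i j hi hj hm
    have hij : i = j := by omega
    subst hij
    exact ⟨0, 0, by omega, by omega, Or.inl ⟨rfl, rfl⟩,
      fun k => by rw [tf_diag, tf_diag]⟩
  | succ N ih =>
    intro i j hi hj hm
    rcases Nat.lt_trichotomy i j with hij | hij | hij
    · -- right move
      by_cases h2 : s i = s (i+1)
      · obtain ⟨a, b, ha, hb, hP, he⟩ := ih (i+1) j (by omega) hj (by omega)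
        exact ⟨a, b, ha, hb, hP, fun k => (pairEq s h2 (tfR2 i j k hij)).trans (he k)⟩
      · by_cases h3 : s i = s j
        · obtain ⟨a, b, ha, hb, hP, he⟩ := ih i (j-1) hi (by omega) (by omega)
          exact ⟨a, b, ha, hb, hP, fun k => (pairEq s h3 (tfR3 i j k hij)).trans (he k)⟩
        · exact ⟨i, j, hi, hj, Or.inr (Or.inl ⟨hij, h2, h3⟩), fun k => rfl⟩
    · subst hij
      exact ⟨0, 0, by omega, by omega, Or.inl ⟨rfl, rfl⟩,
        fun k => by rw [tf_diag, tf_diag]⟩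
    · -- left move
      by_cases h4 : i = j + 1
      · subst h4
        obtain ⟨a, b, ha, hb, hP, he⟩ := ih j (j+1) hj (by omega) (by omega)
        exact ⟨a, b, ha, hb, hP, fun k => (congrArg s (tfR4 j k)).trans (he k)⟩
      · by_cases h2 : s i = s (i-1)
        · obtain ⟨a, b, ha, hb, hP, he⟩ := ih (i-1) j (by omega) hj (by omega)
          exact ⟨a, b, ha, hb, hP, fun k => (pairEq s h2 (tfL2 i j k hij)).trans (he k)⟩
        · by_cases h3 : s i = s j
          · obtain ⟨a, b, ha, hb, hP, he⟩ := ih i (j+1) hi (by omega) (by omega)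
            exact ⟨a, b, ha, hb, hP, fun k => (pairEq s h3 (tfL3 i j k hij)).trans (he k)⟩
          · exact ⟨i, j, hi, hj, Or.inr (Or.inr ⟨by omega, h2, h3⟩), fun k => rfl⟩

/-- extension of a sequence to all of ℕ -/
def extend {n : ℕ} (s : Fin n → ℕ) : ℕ → ℕ := fun m => if h : m < n then s ⟨m, h⟩ else 0

lemma lcs_witness {n : ℕ} {α : Type*} (u v : Fin n → α) (hn : 1 ≤ n)
    (h : n ≤ lcsLen u v + 1) :
    ∃ f g : Fin (n-1) → Fin n, StrictMono f ∧ StrictMono g ∧ ∀ p, u (f p) = v (g p) := by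
  classical
  set S := {k | ∃ f g : Fin k → Fin n, StrictMono f ∧ StrictMono g ∧ ∀ p, u (f p) = v (g p)}
    with hS
  have hne : S.Nonempty := by
    refine ⟨0, fun x => x.elim0, fun x => x.elim0, ?_, ?_, fun p => p.elim0⟩ <;>
      exact fun a => a.elim0
  have hbdd : BddAbove S := by
    refine ⟨n, fun k hk => ?_⟩
    obtain ⟨f, _, hf, _, _⟩ := hk
    simpa using Fintype.card_le_of_injective f hf.injective
  have hmem : sSup S ∈ S := Nat.sSup_mem hne hbdd
  obtain ⟨f, g, hf, hg, hfg⟩ := hmem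
  have hle : n - 1 ≤ lcsLen u v := by omega
  have hle' : n - 1 ≤ sSup S := hle
  exact ⟨f ∘ Fin.castLE hle', g ∘ Fin.castLE hle',
    hf.comp (Fin.strictMono_castLE hle'), hg.comp (Fin.strictMono_castLE hle'),
    fun p => hfg _⟩

lemma mult_multiset {n r : ℕ} (σ : Equiv.Perm (Fin n)) :
    Multiset.map (mult r σ) Finset.univ.val
      = Multiset.map (fun k : Fin n => k.val / r + 1) Finset.univ.val := by
  have h1 : mult r σ = (fun k : Fin n => k.val / r + 1) ∘ σ := rfl
  rw [h1, ← Multiset.map_map]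
  congr 1
  have := Finset.map_univ_equiv σ
  calc Multiset.map (⇑σ) Finset.univ.val = (Finset.univ.map σ.toEmbedding).val := by
        rw [Finset.map_val]; rfl
    _ = Finset.univ.val := by rw [this]

lemma skip_image {m n : ℕ} (hmn : m + 1 = n) (f : Fin m → Fin n) (hf : StrictMono f)
    {i : ℕ} (hi : i < n) (hval : ∀ p : Fin m, (f p).val = if p.val < i then p.val else p.val + 1) :
    Multiset.map f Finset.univ.val = Finset.univ.val.erase ⟨i, hi⟩ := by
  classical
  have himg : Finset.univ.image f = Finset.univ.erase ⟨i, hi⟩ := by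
    apply Finset.eq_of_subset_of_card_le
    · intro x hx
      simp only [Finset.mem_image] at hx
      obtain ⟨p, _, hp⟩ := hx
      subst hp
      refine Finset.mem_erase.mpr ⟨?_, Finset.mem_univ _⟩
      intro hcon
      have := hval p
      have hv : (f p).val = i := by rw [hcon]
      split_ifs at this <;> omega
    · rw [Finset.card_erase_of_mem (Finset.mem_univ _),
        Finset.card_image_of_injective _ hf.injective]
      simp [hmn.symm]
  calc Multiset.map f Finset.univ.val = (Finset.univ.image f).val := by
        rw [Finset.image_val_of_injOn (hf.injective.injOn)]
    _ = (Finset.univ.erase ⟨i, hi⟩).val := by rw [himg]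
    _ = Finset.univ.val.erase ⟨i, hi⟩ := Finset.erase_val _ _

lemma sphere_structure {n r : ℕ} (hn : 1 ≤ n) (c π : Equiv.Perm (Fin n))
    (h : n ≤ lcsLen (mult r c) (mult r π) + 1) :
    ∃ i < n, ∃ j < n, ∀ k : Fin n, mult r π k = extend (mult r c) (tf i j k.val) := by
  classical
  obtain ⟨f, g, hf, hg, hfg⟩ := lcs_witness (mult r c) (mult r π) hn h
  have hmn : n - 1 + 1 = n := by omega
  obtain ⟨i, hi, hfval⟩ := skip_lemma hmn f hf
  obtain ⟨j, hj, hgval⟩ := skip_lemma hmn g hg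
  set s := mult r c with hs
  set y := mult r π with hy
  -- off-j values
  have hoff : ∀ k : Fin n, k.val ≠ j → y k = extend s (tf i j k.val) := by
    intro k hk
    rcases Nat.lt_or_ge k.val j with hkj | hkj
    · have hp : k.val < n - 1 := by omega
      have hgp : g ⟨k.val, hp⟩ = k := by
        apply Fin.ext
        rw [hgval]
        simp [hkj]
      have h1 : y k = s (f ⟨k.val, hp⟩) :=
        ((hfg ⟨k.val, hp⟩).trans (congrArg y hgp)).symm
      rw [h1]
      have hfv := hfval ⟨k.val, hp⟩
      simp only at hfv
      unfold extend
      have hlt : tf i j k.val < n := tf_lt hi hj k.isLt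
      rw [dif_pos hlt]
      congr 1
      apply Fin.ext
      simp only [hfv]
      unfold tf
      split_ifs <;> omega
    · have hkj' : j < k.val := by omega
      have hp : k.val - 1 < n - 1 := by have := k.isLt; omega
      have hgp : g ⟨k.val - 1, hp⟩ = k := by
        apply Fin.ext
        rw [hgval]
        simp only
        split_ifs <;> omega
      have h1 : y k = s (f ⟨k.val - 1, hp⟩) :=
        ((hfg ⟨k.val - 1, hp⟩).trans (congrArg y hgp)).symm
      rw [h1]
      have hfv := hfval ⟨k.val - 1, hp⟩
      simp only at hfv
      unfold extend
      have hlt : tf i j k.val < n := tf_lt hi hj k.isLt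
      rw [dif_pos hlt]
      congr 1
      apply Fin.ext
      simp only [hfv]
      unfold tf
      split_ifs <;> omega
  -- the j value via multisets
  have hmm : Multiset.map y Finset.univ.val = Multiset.map s Finset.univ.val := by
    rw [hs, hy, mult_multiset, mult_multiset]
  have hfi : (⟨i, hi⟩ : Fin n) ∈ Finset.univ.val := Finset.mem_val.mpr (Finset.mem_univ _)
  have hgj : (⟨j, hj⟩ : Fin n) ∈ Finset.univ.val := Finset.mem_val.mpr (Finset.mem_univ _)
  have hs_split : Multiset.map s Finset.univ.val
      = s ⟨i, hi⟩ ::ₘ Multiset.map s (Finset.univ.val.erase ⟨i, hi⟩) := by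
    conv_lhs => rw [← Multiset.cons_erase hfi]
    rw [Multiset.map_cons]
  have hy_split : Multiset.map y Finset.univ.val
      = y ⟨j, hj⟩ ::ₘ Multiset.map y (Finset.univ.val.erase ⟨j, hj⟩) := by
    conv_lhs => rw [← Multiset.cons_erase hgj]
    rw [Multiset.map_cons]
  have heqrest : Multiset.map s (Finset.univ.val.erase ⟨i, hi⟩)
      = Multiset.map y (Finset.univ.val.erase ⟨j, hj⟩) := by
    rw [← skip_image hmn f hf hi hfval, ← skip_image hmn g hg hj hgval,
      Multiset.map_map, Multiset.map_map]
    exact Multiset.map_congr rfl (fun p _ => hfg p)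
  have hkey : y ⟨j, hj⟩ = s ⟨i, hi⟩ := by
    have := hmm
    rw [hs_split, hy_split, heqrest] at this
    have hcount := congrArg (Multiset.count (y ⟨j, hj⟩)) this
    rw [Multiset.count_cons, Multiset.count_cons] at hcount
    split_ifs at hcount <;> omega
  refine ⟨i, hi, j, hj, fun k => ?_⟩
  by_cases hk : k.val = j
  · have hkk : k = ⟨j, hj⟩ := Fin.ext hk
    subst hkk
    have htf : tf i j j = i := by unfold tf; split_ifs <;> omega
    simp only [hk]  -- may be no-op
    rw [show tf i j (⟨j, hj⟩ : Fin n).val = i from htf]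
    unfold extend
    rw [dif_pos hi]
    exact hkey
  · exact hoff k hk

lemma block_card {n r : ℕ} (hr : 0 < r) (hdvd : r ∣ n) {v : ℕ} (hv : v < n / r) :
    (Finset.univ.filter (fun k : Fin n => k.val / r = v)).card = r := by
  classical
  have hn : n / r * r = n := Nat.div_mul_cancel hdvd
  have hvr : v * r + r ≤ n := by
    have h2 : (v + 1) * r ≤ (n / r) * r := Nat.mul_le_mul_right r hv
    rw [hn, add_mul, one_mul] at h2; omega
  have hbij := Finset.card_bij'
    (s := Finset.univ.filter (fun k : Fin n => k.val / r = v)) (t := Finset.range r)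
    (fun k _ => k.val % r) (fun a ha => (⟨v * r + a, by have := Finset.mem_range.mp ha; omega⟩ : Fin n)) ?_ ?_ ?_ ?_
  · rw [hbij, Finset.card_range]
  · intro k hk
    simp only [Finset.mem_filter, Finset.mem_univ, true_and] at hk
    exact Finset.mem_range.mpr (Nat.mod_lt _ hr)
  · intro a ha
    simp only [Finset.mem_filter, Finset.mem_univ, true_and]
    simp only [Finset.mem_range] at ha
    show (v * r + a) / r = v
    rw [Nat.add_comm, Nat.add_mul_div_right _ _ hr, Nat.div_eq_of_lt ha]
    omega
  · intro k hk
    simp only [Finset.mem_filter, Finset.mem_univ, true_and] at hk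
    apply Fin.ext
    show v * r + k.val % r = k.val
    have h1 := Nat.div_add_mod k.val r
    rw [hk, Nat.mul_comm] at h1
    omega
  · intro a ha
    simp only [Finset.mem_range] at ha
    show (v * r + a) % r = a
    rw [Nat.add_comm, Nat.add_mul_mod_self_right, Nat.mod_eq_of_lt ha]

lemma value_fiber {n r : ℕ} (hr : 0 < r) (hdvd : r ∣ n) (c : Equiv.Perm (Fin n))
    {i : ℕ} (hi : i < n) :
    ((Finset.range n).filter
      (fun j => extend (mult r c) j = extend (mult r c) i)).card = r := by
  classical
  set v := (c ⟨i, hi⟩).val / r with hv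
  have hvlt : v < n / r := by
    rw [hv]
    exact Nat.div_lt_div_of_lt_of_dvd hdvd (c ⟨i, hi⟩).isLt
  have key : ∀ j (hj : j < n),
      (extend (mult r c) j = extend (mult r c) i ↔ (c ⟨j, hj⟩).val / r = v) := by
    intro j hj
    unfold extend
    rw [dif_pos hj, dif_pos hi]
    unfold mult
    omega
  have h1 : (Finset.range n).filter (fun j => extend (mult r c) j = extend (mult r c) i)
      = Finset.image (fun k : Fin n => k.val)
          (Finset.univ.filter (fun k : Fin n => (c k).val / r = v)) := by
    ext j
    simp only [Finset.mem_filter, Finset.mem_range, Finset.mem_image, Finset.mem_univ, true_and]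
    constructor
    · rintro ⟨hj, he⟩
      exact ⟨⟨j, hj⟩, (key j hj).mp he, rfl⟩
    · rintro ⟨k, hk, rfl⟩
      exact ⟨k.isLt, (key k.val k.isLt).mpr (by simpa only [Fin.eta] using hk)⟩
  rw [h1, Finset.card_image_of_injective _ Fin.val_injective]
  have h2 : (Finset.univ.filter (fun k : Fin n => (c k).val / r = v)).card
      = (Finset.univ.filter (fun k : Fin n => k.val / r = v)).card := by
    apply Finset.card_bij (fun k _ => c k)
    · intro k hk
      simp only [Finset.mem_filter, Finset.mem_univ, true_and] at hk ⊢
      exact hk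
    · intro k₁ _ k₂ _ h
      exact c.injective h
    · intro k hk
      simp only [Finset.mem_filter, Finset.mem_univ, true_and] at hk ⊢
      exact ⟨c.symm k, by simpa using hk, by simp⟩
  rw [h2, block_card hr hdvd hvlt]

lemma mult_fiber_card {n r : ℕ} (hr : 0 < r) (hdvd : r ∣ n) (y : Fin n → ℕ) :
    (Finset.univ.filter (fun σ : Equiv.Perm (Fin n) => mult r σ = y)).card
      ≤ r.factorial ^ (n / r) := by
  classical
  set F := Finset.univ.filter (fun σ : Equiv.Perm (Fin n) => mult r σ = y) with hF
  rcases Finset.eq_empty_or_nonempty F with he | ⟨σ₀, hσ₀⟩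
  · simp [he]
  · have hy₀ : mult r σ₀ = y := (Finset.mem_filter.mp hσ₀).2
    have hdiv : ∀ (σ : Equiv.Perm (Fin n)), σ ∈ F → ∀ x : Fin n,
        (σ x).val / r = (σ₀ x).val / r := by
      intro σ hσ x
      have h1 : mult r σ = y := (Finset.mem_filter.mp hσ).2
      have := congrFun (h1.trans hy₀.symm) x
      unfold mult at this
      omega
    have hblock : ∀ (v : Fin (n / r)) (a : Fin r), v.val * r + a.val < n := by
      intro v a
      have h2 : (v.val + 1) * r ≤ (n / r) * r := Nat.mul_le_mul_right r v.isLt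
      rw [Nat.div_mul_cancel hdvd, add_mul, one_mul] at h2
      have := a.isLt
      omega
    set Φ : Equiv.Perm (Fin n) → (Fin (n / r) → (Fin r → Fin r)) :=
      fun σ v a => ⟨(σ (σ₀.symm ⟨v.val * r + a.val, hblock v a⟩)).val % r,
        Nat.mod_lt _ hr⟩ with hΦ
    have hrec : ∀ σ ∈ F, ∀ x : Fin n,
        (σ x).val = r * ((σ₀ x).val / r) +
          (Φ σ ⟨(σ₀ x).val / r, Nat.div_lt_div_of_lt_of_dvd hdvd (σ₀ x).isLt⟩
            ⟨(σ₀ x).val % r, Nat.mod_lt _ hr⟩).val := by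
      intro σ hσ x
      have hx : (⟨((σ₀ x).val / r) * r + (σ₀ x).val % r,
          by have h1 := (σ₀ x).isLt; have h2 := Nat.div_add_mod (σ₀ x).val r
             rw [Nat.mul_comm] at h2; omega⟩ : Fin n) = σ₀ x := by
        apply Fin.ext
        show ((σ₀ x).val / r) * r + (σ₀ x).val % r = (σ₀ x).val
        have h2 := Nat.div_add_mod (σ₀ x).val r
        rw [Nat.mul_comm] at h2
        omega
      simp only [hΦ]
      rw [hx]
      simp only [Equiv.symm_apply_apply]
      have h1 := Nat.div_add_mod (σ x).val r
      have h2 := hdiv σ hσ x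
      rw [h2] at h1
      omega
    have hinj : Set.InjOn Φ F := by
      intro σ hσ σ' hσ' heq
      apply Equiv.ext
      intro x
      apply Fin.ext
      rw [hrec σ hσ x, hrec σ' hσ' x, heq]
    have hmaps : ∀ σ ∈ F, Φ σ ∈ Finset.univ.filter
        (fun h : Fin (n / r) → Fin r → Fin r => ∀ v, Function.Injective (h v)) := by
      intro σ hσ
      rw [Finset.mem_filter]
      refine ⟨Finset.mem_univ _, fun v a₁ a₂ hA => ?_⟩
      have e1 := hrec σ hσ (σ₀.symm ⟨v.val * r + a₁.val, hblock v a₁⟩)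
      have e2 := hrec σ hσ (σ₀.symm ⟨v.val * r + a₂.val, hblock v a₂⟩)
      simp only [Equiv.apply_symm_apply] at e1 e2
      have hd1 : (v.val * r + a₁.val) / r = v.val := by
        rw [Nat.add_comm, Nat.add_mul_div_right _ _ hr, Nat.div_eq_of_lt a₁.isLt]; omega
      have hd2 : (v.val * r + a₂.val) / r = v.val := by
        rw [Nat.add_comm, Nat.add_mul_div_right _ _ hr, Nat.div_eq_of_lt a₂.isLt]; omega
      have hm1 : (v.val * r + a₁.val) % r = a₁.val := by
        rw [Nat.add_comm, Nat.add_mul_mod_self_right, Nat.mod_eq_of_lt a₁.isLt]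
      have hm2 : (v.val * r + a₂.val) % r = a₂.val := by
        rw [Nat.add_comm, Nat.add_mul_mod_self_right, Nat.mod_eq_of_lt a₂.isLt]
      -- the full images agree
      have key : σ (σ₀.symm ⟨v.val * r + a₁.val, hblock v a₁⟩)
          = σ (σ₀.symm ⟨v.val * r + a₂.val, hblock v a₂⟩) := by
        apply Fin.ext
        rw [e1, e2]
        congr 1
        · congr 1 <;> simp [hd1, hd2]
        · -- Φ values equal
          have hA' := congrArg Fin.val hA
          simp only [hΦ] at hA' ⊢
          convert hA' using 3 <;> simp [hd1, hd2, hm1, hm2]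
      have := σ.injective key
      have := σ₀.symm.injective this
      have : v.val * r + a₁.val = v.val * r + a₂.val := congrArg Fin.val this
      exact Fin.ext (by omega)
    calc F.card ≤ (Finset.univ.filter
        (fun h : Fin (n / r) → Fin r → Fin r => ∀ v, Function.Injective (h v))).card := by
          exact Finset.card_le_card_of_injOn Φ hmaps hinj
      _ = Fintype.card {h : Fin (n / r) → Fin r → Fin r // ∀ v, Function.Injective (h v)} :=
          (Fintype.card_subtype _).symm
      _ = Fintype.card (Fin (n / r) → (Fin r ↪ Fin r)) := by
          refine Fintype.card_congr ⟨fun h v => ⟨h.1 v, h.2 v⟩, fun H => ⟨fun v => H v,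
            fun v => (H v).injective⟩, fun h => rfl, fun H => ?_⟩
          funext v
          rfl
      _ = (r.factorial) ^ (n / r) := by
          rw [Fintype.card_fun, Fintype.card_embedding_eq]
          simp [Nat.descFactorial_self]

open scoped Classical in
lemma Pcount {n r : ℕ} (hr : 0 < r) (h3 : 3 * r ≤ n) (s : ℕ → ℕ)
    (hfib : ∀ i < n, ((Finset.range n).filter (fun j => s j = s i)).card = r) :
    (((Finset.range n) ×ˢ (Finset.range n)).filter (fun p : ℕ × ℕ => Pcond s p.1 p.2)).card
      ≤ n * (n - 1 - r) + 2 := by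
  classical
  have hn2 : 2 * r ≤ n - r := by omega
  have hnr1 : 1 ≤ n - r := by omega
  have hn3 : 3 ≤ n := by omega
  set cnd : ℕ → ℕ → Prop := fun i j =>
    (i < j ∧ s i ≠ s (i+1) ∧ s i ≠ s j) ∨ (j + 1 < i ∧ s i ≠ s (i-1) ∧ s i ≠ s j) with hcnd
  set q : ℕ → ℕ := fun i => ((Finset.range n).filter (cnd i)).card with hq
  -- complements
  set Vc : ℕ → Finset ℕ := fun i => (Finset.range n).filter (fun j => s j ≠ s i) with hVc
  have hVc_card : ∀ i < n, (Vc i).card = n - r := by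
    intro i hi
    have := Finset.card_filter_add_card_filter_not
      (s := Finset.range n) (p := fun j => s j = s i)
    rw [hfib i hi, Finset.card_range] at this
    have he : (Vc i).card = (Finset.filter (fun j => ¬ s j = s i) (Finset.range n)).card := by
      rfl
    omega
  have hsub_basic : ∀ i, (Finset.range n).filter (cnd i) ⊆ Vc i := by
    intro i j hj
    rw [Finset.mem_filter] at hj ⊢
    rcases hj.2 with ⟨_, _, h⟩ | ⟨_, _, h⟩ <;> exact ⟨hj.1, fun hh => h hh.symm⟩
  have hq_basic : ∀ i < n, q i ≤ n - r := by
    intro i hi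
    rw [← hVc_card i hi]
    exact Finset.card_le_card (hsub_basic i)
  have hq_erase : ∀ i < n, ∀ m, m ∈ Vc i →
      (∀ j, cnd i j → j ≠ m) → q i ≤ n - r - 1 := by
    intro i hi m hm hnot
    have hsub : (Finset.range n).filter (cnd i) ⊆ (Vc i).erase m := by
      intro j hj
      rw [Finset.mem_erase]
      exact ⟨hnot j (Finset.mem_filter.mp hj).2, hsub_basic i hj⟩
    calc q i ≤ ((Vc i).erase m).card := Finset.card_le_card hsub
      _ = (Vc i).card - 1 := Finset.card_erase_of_mem hm
      _ = n - r - 1 := by rw [hVc_card i hi]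
  have hq1 : ∀ i < n, 1 ≤ i → s i ≠ s (i-1) → q i ≤ n - r - 1 := by
    intro i hi h1 hne
    refine hq_erase i hi (i-1) ?_ ?_
    · rw [Finset.mem_filter, Finset.mem_range]
      exact ⟨by omega, fun hh => hne hh.symm⟩
    · intro j hj
      rcases hj with ⟨h, _, _⟩ | ⟨h, _, _⟩ <;> omega
  have hq2 : ∀ i < n, 1 ≤ i → s i = s (i-1) → ∀ m < i, s m ≠ s i → q i ≤ n - r - 1 := by
    intro i hi h1 heq m hm hne
    refine hq_erase i hi m ?_ ?_
    · rw [Finset.mem_filter, Finset.mem_range]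
      exact ⟨by omega, hne⟩
    · intro j hj
      rcases hj with ⟨h, _, _⟩ | ⟨_, h, _⟩
      · omega
      · exact absurd heq h
  have hq3 : ∀ i < n, 1 ≤ i → s i = s (i-1) → (s i = s (i+1) ∨ i = n-1) → q i = 0 := by
    intro i hi h1 heq hor
    rw [hq]
    simp only
    rw [Finset.card_eq_zero, Finset.filter_eq_empty_iff]
    intro j hj hc
    rcases hc with ⟨h, hne, _⟩ | ⟨_, hne, _⟩
    · rcases hor with h2 | h2
      · exact hne h2
      · rw [Finset.mem_range] at hj; omega
    · exact hne heq
  have hq0 : s 0 = s 1 → q 0 = 0 := by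
    intro h01
    rw [hq]
    simp only
    rw [Finset.card_eq_zero, Finset.filter_eq_empty_iff]
    intro j hj hc
    rcases hc with ⟨_, hne, _⟩ | ⟨h, _, _⟩
    · exact hne h01
    · omega
  -- step 1 : the filter is inside the union
  have hstep1 : (((Finset.range n) ×ˢ (Finset.range n)).filter (fun p : ℕ × ℕ => Pcond s p.1 p.2)).card
      ≤ 1 + ∑ i ∈ Finset.range n, q i := by
    have hsub : ((Finset.range n) ×ˢ (Finset.range n)).filter (fun p => Pcond s p.1 p.2)
        ⊆ insert ((0:ℕ), (0:ℕ)) ((Finset.range n).biUnion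
            (fun i => ((Finset.range n).filter (cnd i)).image (fun j => (i, j)))) := by
      intro p hp
      rw [Finset.mem_filter, Finset.mem_product] at hp
      obtain ⟨⟨hp1, hp2⟩, hPc⟩ := hp
      rcases hPc with ⟨h1, h2⟩ | hc | hc
      · rw [Finset.mem_insert]
        left
        ext <;> simp [h1, h2]
      · rw [Finset.mem_insert]
        right
        rw [Finset.mem_biUnion]
        exact ⟨p.1, hp1, Finset.mem_image.mpr ⟨p.2,
          Finset.mem_filter.mpr ⟨hp2, Or.inl hc⟩, rfl⟩⟩
      · rw [Finset.mem_insert]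
        right
        rw [Finset.mem_biUnion]
        exact ⟨p.1, hp1, Finset.mem_image.mpr ⟨p.2,
          Finset.mem_filter.mpr ⟨hp2, Or.inr hc⟩, rfl⟩⟩
    calc _ ≤ _ := Finset.card_le_card hsub
      _ ≤ 1 + ((Finset.range n).biUnion
            (fun i => ((Finset.range n).filter (cnd i)).image (fun j => (i, j)))).card := by
          have := Finset.card_insert_le ((0:ℕ), (0:ℕ)) ((Finset.range n).biUnion
            (fun i => ((Finset.range n).filter (cnd i)).image (fun j => (i, j))))
          omega
      _ ≤ 1 + ∑ i ∈ Finset.range n, q i := by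
          have h1 := Finset.card_biUnion_le (s := Finset.range n)
            (t := fun i => ((Finset.range n).filter (cnd i)).image (fun j => (i, j)))
          have h2 : ∀ i ∈ Finset.range n,
              (((Finset.range n).filter (cnd i)).image (fun j => (i, j))).card ≤ q i := by
            intro i _
            exact Finset.card_image_le
          have h3 := Finset.sum_le_sum h2
          omega
  -- step 2 : bound the sum
  have hstep2 : ∑ i ∈ Finset.range n, q i ≤ n * (n - 1 - r) + 1 := by
    have hnr1' : n - 1 - r = n - r - 1 := by omega
    rw [hnr1']
    by_cases hB : s 0 = s 1
    · -- initial run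
      have hex : ∃ m, n - 1 ≤ m ∨ s m ≠ s (m+1) := ⟨n - 1, Or.inl le_rfl⟩
      have hdec : DecidablePred fun m => n - 1 ≤ m ∨ s m ≠ s (m+1) := Classical.decPred _
      set i₀ := Nat.find hex with hi₀def
      have hspec := Nat.find_spec hex
      rw [← hi₀def] at hspec
      have hmin : ∀ m < i₀, s m = s (m+1) ∧ m < n - 1 := by
        intro m hm
        have := Nat.find_min hex hm
        push_neg at this
        exact ⟨this.2, by omega⟩
      have hi₀pos : 1 ≤ i₀ := by
        rcases Nat.eq_zero_or_pos i₀ with h | h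
        · rw [h] at hspec
          rcases hspec with h' | h' <;> [omega; exact absurd hB h']
        · exact h
      have hi₀lt : i₀ ≤ n - 1 := by
        by_contra h
        have := hmin (n-1) (by omega)
        omega
      have hconst : ∀ m ≤ i₀, s m = s 0 := by
        intro m hm
        induction m with
        | zero => rfl
        | succ k ih =>
          have hk := hmin k (by omega)
          rw [← hk.1]
          exact ih (by omega)
      -- individual bounds
      have hother : ∀ i < n, i ≠ 0 → i ≠ i₀ → q i ≤ n - r - 1 := by
        intro i hi hne0 hnei₀
        by_cases hL : s i = s (i-1)
        · rcases Nat.lt_or_ge i i₀ with hlt | hge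
          · have := hmin i hlt
            have h0 := hq3 i hi (by omega) hL (Or.inl this.1)
            omega
          · have hgt : i₀ < i := by omega
            by_cases hs0 : s i = s 0
            · have hstep : s i₀ ≠ s (i₀ + 1) := by
                rcases hspec with h' | h'
                · omega
                · exact h'
              have hii : i₀ + 1 < i ∨ i₀ + 1 = i := by omega
              have hne' : s (i₀ + 1) ≠ s i := by
                intro hh
                apply hstep
                rw [hconst i₀ le_rfl, hh, hs0]
              rcases hii with hii | hii
              · exact hq2 i hi (by omega) hL (i₀+1) (by omega) hne'
              · exfalso
                apply hne'
                rw [hii]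
            · exact hq2 i hi (by omega) hL 0 (by omega) (fun hh => hs0 hh.symm)
        · exact hq1 i hi (by omega) hL
      have hq0' : q 0 = 0 := hq0 hB
      have hqi₀ : q i₀ ≤ n - r := hq_basic i₀ (by omega)
      -- assemble
      have h0mem : (0:ℕ) ∈ (Finset.range n).erase i₀ :=
        Finset.mem_erase.mpr ⟨by omega, Finset.mem_range.mpr (by omega)⟩
      have hi₀mem : i₀ ∈ Finset.range n := Finset.mem_range.mpr (by omega)
      rw [← Finset.add_sum_erase _ q hi₀mem, ← Finset.add_sum_erase _ q h0mem]
      have hrest : ∑ i ∈ ((Finset.range n).erase i₀).erase 0, q i ≤ (n-2) * (n - r - 1) := by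
        have hbd : ∀ i ∈ ((Finset.range n).erase i₀).erase 0, q i ≤ n - r - 1 := by
          intro i hi
          rw [Finset.mem_erase, Finset.mem_erase, Finset.mem_range] at hi
          exact hother i hi.2.2 hi.1 hi.2.1
        calc ∑ i ∈ ((Finset.range n).erase i₀).erase 0, q i
            ≤ ∑ _i ∈ ((Finset.range n).erase i₀).erase 0, (n - r - 1) := Finset.sum_le_sum hbd
          _ = (n-2) * (n - r - 1) := by
              rw [Finset.sum_const, smul_eq_mul]
              congr 1
              rw [Finset.card_erase_of_mem h0mem, Finset.card_erase_of_mem hi₀mem,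
                Finset.card_range]
              omega
        
      have harith : (n - r) + (0 + (n-2) * (n - r - 1)) ≤ n * (n - r - 1) + 1 := by
        have hmul : (n-2) * (n - r - 1) + 2 * (n - r - 1) = n * (n - r - 1) := by
          rw [← add_mul]
          congr 1
          omega
        omega
      omega
    · -- no initial run
      have hbd : ∀ i ∈ Finset.range n, q i ≤ (n - r - 1) + (if i = 0 then 1 else 0) := by
        intro i hi
        rw [Finset.mem_range] at hi
        by_cases h0 : i = 0
        · subst h0
          have := hq_basic 0 (by omega)
          have hone : (if (0:ℕ) = 0 then 1 else 0) = 1 := if_pos rfl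
          rw [hone]
          omega
        · simp only [if_neg h0]
          by_cases hL : s i = s (i-1)
          · have hi1 : 2 ≤ i := by
              rcases Nat.lt_or_ge i 2 with h | h
              · interval_cases i
                · omega
                · exact absurd hL.symm (by simpa using hB)
              · exact h
            by_cases hs0 : s 0 = s i
            · refine hq2 i hi (by omega) hL 1 (by omega) ?_
              intro hh
              exact hB (hs0.symm ▸ hh.symm ▸ rfl)
            · exact hq2 i hi (by omega) hL 0 (by omega) hs0
          · exact hq1 i hi (by omega) hL
      calc ∑ i ∈ Finset.range n, q i
          ≤ ∑ i ∈ Finset.range n, ((n - r - 1) + (if i = 0 then 1 else 0)) :=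
            Finset.sum_le_sum hbd
        _ = n * (n - r - 1) + 1 := by
            rw [Finset.sum_add_distrib, Finset.sum_const, Finset.card_range, smul_eq_mul,
              Finset.sum_ite_eq' (Finset.range n) 0 (fun _ => 1)]
            simp [Finset.mem_range.mpr (show 0 < n by omega)]
  omega

open scoped Classical in
lemma sphere_finset_card {n r : ℕ} (hr : 0 < r) (hdvd : r ∣ n) (h3 : 3 * r ≤ n)
    (c : Equiv.Perm (Fin n)) :
    ((Finset.univ.filter
        (fun σ : Equiv.Perm (Fin n) => n ≤ lcsLen (mult r c) (mult r σ) + 1)).image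
      (mult r)).card ≤ 1 + (n - 1) ^ 2 - (r - 1) * n := by
  classical
  set s : ℕ → ℕ := extend (mult r c) with hs
  set P : Finset (ℕ × ℕ) :=
    ((Finset.range n) ×ˢ (Finset.range n)).filter (fun p : ℕ × ℕ => Pcond s p.1 p.2) with hP
  set D : ℕ × ℕ → (Fin n → ℕ) := fun p => fun k : Fin n => s (tf p.1 p.2 k.val) with hD
  have hsub : (Finset.univ.filter
        (fun σ : Equiv.Perm (Fin n) => n ≤ lcsLen (mult r c) (mult r σ) + 1)).image (mult r)
      ⊆ P.image D := by
    intro y hy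
    rw [Finset.mem_image] at hy
    obtain ⟨π, hπ, rfl⟩ := hy
    rw [Finset.mem_filter] at hπ
    obtain ⟨i, hi, j, hj, hstruct⟩ := sphere_structure (by omega) c π hπ.2
    obtain ⟨a, b, ha, hb, hPc, heq⟩ := red n s (2*(j-i) + 3*(i-j)) i j hi hj le_rfl
    rw [Finset.mem_image]
    refine ⟨(a, b), ?_, ?_⟩
    · rw [hP, Finset.mem_filter, Finset.mem_product]
      exact ⟨⟨Finset.mem_range.mpr ha, Finset.mem_range.mpr hb⟩, hPc⟩
    · funext k
      rw [hD]
      simp only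
      rw [← heq k.val]
      exact (hstruct k).symm
  calc _ ≤ (P.image D).card := Finset.card_le_card hsub
    _ ≤ P.card := Finset.card_image_le
    _ ≤ n * (n - 1 - r) + 2 := Pcount hr h3 s (fun i hi => value_fiber hr hdvd c hi)
    _ ≤ 1 + (n - 1) ^ 2 - (r - 1) * n := by
        have h1 : 1 ≤ r := hr
        have h2 : r + 2 ≤ n := by omega
        have hble : (r - 1) * n ≤ (n - 1) * (n - 1) := by
          calc (r - 1) * n ≤ (n - 2) * n := Nat.mul_le_mul_right n (by omega)
            _ ≤ (n - 1) * (n - 1) := by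
                obtain ⟨m, rfl⟩ : ∃ m, n = m + 2 := ⟨n - 2, by omega⟩
                simp only [Nat.add_sub_cancel]
                have : (m + 2) - 1 = m + 1 := by omega
                rw [this]
                nlinarith
        have hpow : (n - 1) ^ 2 = (n - 1) * (n - 1) := sq (n-1) ▸ rfl
        rw [hpow]
        zify [hble, show (1:ℕ) ≤ n by omega, show r ≤ n - 1 by omega,
          show (r-1) * n ≤ 1 + (n-1)*(n-1) by omega]
        have hn1 : ((n - 1 : ℕ) : ℤ) = (n : ℤ) - 1 := by
          have : (1:ℕ) ≤ n := by omega
          omega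
        have hn1r : ((n - 1 - r : ℕ) : ℤ) = (n : ℤ) - 1 - r := by omega
        have hr1 : ((r - 1 : ℕ) : ℤ) = (r : ℤ) - 1 := by omega
        rw [hr1]
        ring_nf
        nlinarith [sq_nonneg ((n:ℤ) - r)]

/-- Perfect code bound: a perfect single-error correcting `r`-regular
multipermutation code (with `n/r ≠ 2`) satisfies
`|C|_r ≥ n! / ((r!)^{n/r} · (1 + (n−1)² − (r−1)n))`. -/
theorem perfect_code_bound {n r : ℕ} (hr : 0 < r) (hdvd : r ∣ n) (hnr : n / r ≠ 2)
    (C : Set (Equiv.Perm (Fin n)))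
    (hclosed : ∀ c ∈ C, ∀ σ : Equiv.Perm (Fin n), mult r σ = mult r c → σ ∈ C)
    (hperfect : ∀ σ : Equiv.Perm (Fin n),
      ∃! x : Fin n → ℕ, ∃ c ∈ C, x = mult r c ∧ mult r σ ∈ multSphere r c 1) :
    n.factorial / (r.factorial ^ (n / r) * (1 + (n - 1) ^ 2 - (r - 1) * n)) ≤
      {x : Fin n → ℕ | ∃ c ∈ C, x = mult r c}.ncard := by
  classical
  set S := 1 + (n - 1) ^ 2 - (r - 1) * n with hS
  set M := {x : Fin n → ℕ | ∃ c ∈ C, x = mult r c} with hM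
  have hMfin : M.Finite := by
    apply Set.Finite.subset (Set.finite_range (mult r : Equiv.Perm (Fin n) → (Fin n → ℕ)))
    rintro x ⟨c, _, rfl⟩
    exact ⟨c, rfl⟩
  -- a nonempty code
  have hMne : M.Nonempty := by
    obtain ⟨x, ⟨c, hc, hx, _⟩, _⟩ := hperfect 1
    exact ⟨x, c, hc, hx⟩
  have hM1 : 1 ≤ M.ncard := (Set.ncard_pos hMfin).mpr hMne
  by_cases hn1 : n ≤ 1
  · have hfact : n.factorial = 1 := by interval_cases n <;> rfl
    rw [hfact]
    calc 1 / (r.factorial ^ (n / r) * S) ≤ 1 := Nat.div_le_self _ _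
      _ ≤ M.ncard := hM1
  · push_neg at hn1
    by_cases hS0 : S = 0
    · rw [hS0, mul_zero, Nat.div_zero]
      exact Nat.zero_le _
    · -- show 3 * r ≤ n
      have hq1 : n / r ≠ 1 := by
        intro h
        apply hS0
        have hn_eq : n = r := by
          have := Nat.div_mul_cancel hdvd
          rw [h, one_mul] at this
          omega
        subst hn_eq
        rw [hS]
        obtain ⟨m, rfl⟩ : ∃ m, n = m + 2 := ⟨n - 2, by omega⟩
        have e1 : m + 2 - 1 = m + 1 := by omega
        rw [e1]
        have e2 : (m + 1) ^ 2 = m * m + 2 * m + 1 := by ring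
        rw [e2]
        have : (m + 1) * (m + 2) = m * m + 3 * m + 2 := by ring
        omega
      have hq0 : n / r ≠ 0 := by
        intro h
        have := Nat.div_mul_cancel hdvd
        rw [h, zero_mul] at this
        omega
      have h3 : 3 * r ≤ n := by
        have h31 : 3 ≤ n / r := by
          generalize hgen : n / r = q at hq1 hq0 hnr
          omega
        have := Nat.div_mul_cancel hdvd
        calc 3 * r ≤ (n / r) * r := Nat.mul_le_mul_right r h31
          _ = n := this
      -- main counting
      set K := r.factorial ^ (n / r) * S with hK
      have hKpos : 0 < K := by
        apply Nat.mul_pos (Nat.pow_pos (Nat.factorial_pos r))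
        omega
      set A : Equiv.Perm (Fin n) → (Fin n → ℕ) := fun σ => (hperfect σ).choose with hA
      have hAspec : ∀ σ, ∃ c ∈ C, A σ = mult r c ∧ mult r σ ∈ multSphere r c 1 :=
        fun σ => (hperfect σ).choose_spec.1
      -- fiber bound
      have hfiber : ∀ x ∈ Finset.univ.image A,
          (Finset.univ.filter (fun σ => A σ = x)).card ≤ K := by
        intro x hx
        rw [Finset.mem_image] at hx
        obtain ⟨σx, _, hσx⟩ := hx
        obtain ⟨cx, hcx, hcx2, _⟩ := hAspec σx
        have hxc : x = mult r cx := by rw [← hσx, hcx2]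
        have hsub : Finset.univ.filter (fun σ => A σ = x)
            ⊆ Finset.univ.filter
              (fun σ : Equiv.Perm (Fin n) => n ≤ lcsLen (mult r cx) (mult r σ) + 1) := by
          intro σ hσ
          rw [Finset.mem_filter] at hσ ⊢
          refine ⟨Finset.mem_univ _, ?_⟩
          obtain ⟨c, hc, hc2, hsph⟩ := hAspec σ
          obtain ⟨π, hπ, hd⟩ := hsph
          have hcc : mult r c = mult r cx := by rw [← hc2, hσ.2, hxc]
          unfold multDist at hd
          rw [hcc, ← hπ] at hd
          omega
        calc (Finset.univ.filter (fun σ => A σ = x)).card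
            ≤ (Finset.univ.filter
              (fun σ : Equiv.Perm (Fin n) => n ≤ lcsLen (mult r cx) (mult r σ) + 1)).card :=
              Finset.card_le_card hsub
          _ ≤ r.factorial ^ (n / r) * (((Finset.univ.filter
              (fun σ : Equiv.Perm (Fin n) => n ≤ lcsLen (mult r cx) (mult r σ) + 1)).image
                (mult r)).card) := by
              apply Finset.card_le_mul_card_image
              intro b hb
              calc _ ≤ (Finset.univ.filter
                  (fun σ : Equiv.Perm (Fin n) => mult r σ = b)).card :=
                    Finset.card_le_card (by
                      intro σ hσ
                      rw [Finset.mem_filter] at hσ ⊢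
                      exact ⟨Finset.mem_univ _, hσ.2⟩)
                _ ≤ r.factorial ^ (n / r) := mult_fiber_card hr hdvd b
          _ ≤ r.factorial ^ (n / r) * S :=
              Nat.mul_le_mul_left _ (sphere_finset_card hr hdvd h3 cx)
      have hcount : (Finset.univ : Finset (Equiv.Perm (Fin n))).card
          ≤ K * (Finset.univ.image A).card :=
        Finset.card_le_mul_card_image _ K hfiber
      have hMfincard : (Finset.univ.image A).card ≤ M.ncard := by
        have hsub : ↑(Finset.univ.image A) ⊆ M := by
          intro x hx
          simp only [Finset.coe_image, Set.mem_image] at hx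
          obtain ⟨σ, _, rfl⟩ := hx
          obtain ⟨c, hc, hc2, _⟩ := hAspec σ
          exact ⟨c, hc, hc2⟩
        calc (Finset.univ.image A).card = (↑(Finset.univ.image A) : Set _).ncard :=
              (Set.ncard_coe_finset _).symm
          _ ≤ M.ncard := Set.ncard_le_ncard hsub hMfin
      have hcard : (Finset.univ : Finset (Equiv.Perm (Fin n))).card = n.factorial := by
        rw [Finset.card_univ, Fintype.card_perm, Fintype.card_fin]
      rw [hcard] at hcount
      calc n.factorial / K ≤ (K * (Finset.univ.image A).card) / K :=
            Nat.div_le_div_right hcount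
        _ = (Finset.univ.image A).card := Nat.mul_div_cancel_left _ hKpos
        _ ≤ M.ncard := hMfincard

end UlamPaper
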